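/- The decoupled Gromov–Wasserstein distance d_GW^bi is a legitimate metric on finite metric measure spaces modulo isomorphism: it is nonnegative and symmetric, it satisfies the triangle inequality d_GW^bi(𝐗,𝐘) ≤ d_GW^bi(𝐗,𝐙) + d_GW^bi(𝐙,𝐘) for all finite MMSs 𝐗, 𝐘, 𝐙, and d_GW^bi(𝐗,𝐘) = 0 if and only if 𝐗 and 𝐘 are isomorphic, i.e., there exists a bijective isometry ψ : X → Y with ψ_# μ_X = μ_Y. -/

import Mathlib

open scoped BigOperators NNReal

namespace WLGW

variable {X Y W : Type*}

/-- A probability mass function on a finite type. -/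
def IsPMF [Fintype X] (p : X → ℝ) : Prop :=
  (∀ x, 0 ≤ p x) ∧ ∑ x, p x = 1

/-- `γ` is a coupling of `p` and `q`. -/
def IsCoupling [Fintype X] [Fintype Y] (p : X → ℝ) (q : Y → ℝ) (γ : X → Y → ℝ) : Prop :=
  (∀ x y, 0 ≤ γ x y) ∧ (∀ x, ∑ y, γ x y = p x) ∧ (∀ y, ∑ x, γ x y = q y)

/-- `(m, μ)` is a measure Markov chain: each `m x` is a pmf, and `μ` is a fully supported
stationary pmf. -/
def IsMMC [Fintype X] (m : X → X → ℝ) (μ : X → ℝ) : Prop :=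
  (∀ x, IsPMF (m x)) ∧ IsPMF μ ∧ (∀ x, 0 < μ x) ∧ (∀ x', ∑ x, m x x' * μ x = μ x')

/-- `dX` is a metric on the finite type `X`. -/
def IsMetricOn [Fintype X] (dX : X → X → ℝ) : Prop :=
  (∀ x, dX x x = 0) ∧ (∀ x y, dX x y = dX y x) ∧ (∀ x y, x ≠ y → 0 < dX x y) ∧
    (∀ x y z, dX x z ≤ dX x y + dX y z)

/-- The iterated Weisfeiler–Lehman cost `D_k`. -/
noncomputable def costIter [Fintype X] [Fintype Y] (mX : X → X → ℝ) (mY : Y → Y → ℝ)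
    (D0 : X → Y → ℝ) : ℕ → X → Y → ℝ
  | 0 => D0
  | k + 1 => fun x y => sInf {r : ℝ | ∃ γ : X → Y → ℝ, IsCoupling (mX x) (mY y) γ ∧
      r = ∑ x', ∑ y', costIter mX mY D0 k x' y' * γ x' y'}

/-- The Weisfeiler–Lehman distance of depth `k` between two labeled measure Markov chains. -/
noncomputable def dWL {Z : Type*} [PseudoMetricSpace Z] [Fintype X] [Fintype Y]
    (mX : X → X → ℝ) (μX : X → ℝ) (ℓX : X → Z)
    (mY : Y → Y → ℝ) (μY : Y → ℝ) (ℓY : Y → Z) (k : ℕ) : ℝ :=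
  sInf {r : ℝ | ∃ γ : X → Y → ℝ, IsCoupling μX μY γ ∧
      r = ∑ x, ∑ y, costIter mX mY (fun x y => dist (ℓX x) (ℓY y)) k x y * γ x y}

/-- The absolute Weisfeiler–Lehman distance. -/
noncomputable def dWLsup {Z : Type*} [PseudoMetricSpace Z] [Fintype X] [Fintype Y]
    (mX : X → X → ℝ) (μX : X → ℝ) (ℓX : X → Z)
    (mY : Y → Y → ℝ) (μY : Y → ℝ) (ℓY : Y → Z) : ℝ :=
  ⨆ k : ℕ, dWL mX μX ℓX mY μY ℓY k

/-- Isomorphism of labeled measure Markov chains. -/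
def LMMCIso {Z : Type*} [Fintype X] [Fintype Y]
    (mX : X → X → ℝ) (μX : X → ℝ) (ℓX : X → Z)
    (mY : Y → Y → ℝ) (μY : Y → ℝ) (ℓY : Y → Z) : Prop :=
  ∃ ψ : X ≃ Y, (∀ x, ℓY (ψ x) = ℓX x) ∧ (∀ x x', mY (ψ x) (ψ x') = mX x x') ∧
    (∀ x, μY (ψ x) = μX x)

/-- The `q`-Markov kernel of a finite simple graph. -/
noncomputable def graphKernel {V : Type*} [Fintype V] [DecidableEq V] (G : SimpleGraph V) [DecidableRel G.Adj]
    (q : ℝ) (v v' : V) : ℝ :=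
  if G.degree v = 0 then (if v' = v then 1 else 0)
  else (if v' = v then q else 0) + (if G.Adj v v' then (1 - q) / (G.degree v : ℝ) else 0)

/-- The stationary degree measure of a finite simple graph. -/
noncomputable def graphMu {V : Type*} [Fintype V] (G : SimpleGraph V) [DecidableRel G.Adj]
    (v : V) : ℝ :=
  ((max (G.degree v) 1 : ℕ) : ℝ) / ∑ v', ((max (G.degree v') 1 : ℕ) : ℝ)

/-- The type of depth-`k` Weisfeiler–Lehman labels over an initial label set `Z`. -/
def WLType (Z : Type*) : ℕ → Type _
  | 0 => Z
  | k + 1 => WLType Z k × Multiset (WLType Z k)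

/-- The Weisfeiler–Lehman label hierarchy `ℓ^k` of a labeled graph. -/
def wlLabel {V Z : Type*} [Fintype V] (G : SimpleGraph V) [DecidableRel G.Adj] (ℓ : V → Z) :
    (k : ℕ) → V → WLType Z k
  | 0 => ℓ
  | k + 1 => fun v => (wlLabel G ℓ k v, (G.neighborFinset v).val.map (wlLabel G ℓ k))

/-- The multiset `L_k((G, ℓ))` of depth-`k` WL labels of all vertices. -/
def wlMultiset {V Z : Type*} [Fintype V] (G : SimpleGraph V) [DecidableRel G.Adj]
    (ℓ : V → Z) (k : ℕ) : Multiset (WLType Z k) :=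
  Finset.univ.val.map (wlLabel G ℓ k)

/-- The WL test distinguishes two labeled graphs. -/
def WLDistinguishes {V₁ V₂ Z : Type*} [Fintype V₁] [Fintype V₂]
    (G₁ : SimpleGraph V₁) [DecidableRel G₁.Adj] (ℓ₁ : V₁ → Z)
    (G₂ : SimpleGraph V₂) [DecidableRel G₂.Adj] (ℓ₂ : V₂ → Z) : Prop :=
  ∃ k, wlMultiset G₁ ℓ₁ k ≠ wlMultiset G₂ ℓ₂ k

/-- The relabeling `ℓ^g(v) = g(ℓ(v), deg v, |V|)`. -/
def relabel {V Z Z₁ : Type*} [Fintype V] (G : SimpleGraph V) [DecidableRel G.Adj]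
    (ℓ : V → Z) (g : Z × ℕ × ℕ → Z₁) : V → Z₁ :=
  fun v => g (ℓ v, G.degree v, Fintype.card V)

/-- `kpow m k = m^{⊗k}`, the `k`-step Markov kernel (`kpow m 0` is the identity kernel). -/
def kpow [Fintype X] [DecidableEq X] (m : X → X → ℝ) : ℕ → X → X → ℝ
  | 0 => fun x x' => if x' = x then 1 else 0
  | k + 1 => fun x x'' => ∑ x', kpow m k x' x'' * m x x'

/-- The Wasserstein distance between the pushforwards `(ℓX)_# p` and `(ℓY)_# q`, expressed
through couplings of `p` and `q`. -/
noncomputable def wassersteinCost {Z : Type*} [PseudoMetricSpace Z] [Fintype X] [Fintype Y]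
    (ℓX : X → Z) (ℓY : Y → Z) (p : X → ℝ) (q : Y → ℝ) : ℝ :=
  sInf {r : ℝ | ∃ γ : X → Y → ℝ, IsCoupling p q γ ∧
      r = ∑ x, ∑ y, dist (ℓX x) (ℓY y) * γ x y}

/-- The lower bound `d_WLLB^(k)` for the WL distance. -/
noncomputable def dWLLB {Z : Type*} [PseudoMetricSpace Z] [Fintype X] [Fintype Y]
    [DecidableEq X] [DecidableEq Y]
    (mX : X → X → ℝ) (μX : X → ℝ) (ℓX : X → Z)
    (mY : Y → Y → ℝ) (μY : Y → ℝ) (ℓY : Y → Z) (k : ℕ) : ℝ :=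
  sInf {r : ℝ | ∃ γ : X → Y → ℝ, IsCoupling μX μY γ ∧
      r = ∑ x, ∑ y, wassersteinCost ℓX ℓY (kpow mX k x) (kpow mY k y) * γ x y}

/-- Dimension sequence of an MCNN: `mcnnDim d dims 0 = d`, then `dims`. -/
def mcnnDim (d : ℕ) (dims : ℕ → ℕ) : ℕ → ℕ
  | 0 => d
  | i + 1 => dims i

/-- A `k`-layer Markov chain neural network on `ℝ^d`-LMMCs: Lipschitz maps `φ_1, …, φ_{k+1}`
followed by a continuous map `ψ`. -/
structure MCNN (d k : ℕ) where
  dims : ℕ → ℕ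
  φ : (i : ℕ) → EuclideanSpace ℝ (Fin (mcnnDim d dims i)) →
      EuclideanSpace ℝ (Fin (mcnnDim d dims (i + 1)))
  φ_lip : ∀ i, ∃ K : ℝ≥0, LipschitzWith K (φ i)
  ψ : EuclideanSpace ℝ (Fin (mcnnDim d dims (k + 1))) → ℝ
  ψ_cont : Continuous ψ

/-- Labels after `j` layers of an MCNN (the map `F_{φ_j} ∘ ⋯ ∘ F_{φ_1}`). -/
noncomputable def mcnnLabel {X : Type*} [Fintype X] {d k : ℕ} (N : MCNN d k)
    (m : X → X → ℝ) (ℓ : X → EuclideanSpace ℝ (Fin d)) :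
    (j : ℕ) → X → EuclideanSpace ℝ (Fin (mcnnDim d N.dims j))
  | 0 => ℓ
  | j + 1 => fun x => ∑ x', m x x' • N.φ j (mcnnLabel N m ℓ j x')

/-- Evaluation of an MCNN on an `ℝ^d`-LMMC: `ψ ∘ S_{φ_{k+1}} ∘ F_{φ_k} ∘ ⋯ ∘ F_{φ_1}`. -/
noncomputable def mcnnEval {X : Type*} [Fintype X] {d k : ℕ} (N : MCNN d k)
    (m : X → X → ℝ) (μ : X → ℝ) (ℓ : X → EuclideanSpace ℝ (Fin d)) : ℝ :=
  N.ψ (∑ x, μ x • N.φ k (mcnnLabel N m ℓ k x))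

/-- `k`-step couplings between the Markov kernels `mX` and `mY` (defined for `k ≥ 1`). -/
def IsStepCoupling [Fintype X] [Fintype Y] (mX : X → X → ℝ) (mY : Y → Y → ℝ) :
    ℕ → (X → Y → X → Y → ℝ) → Prop
  | 0, _ => False
  | 1, ν => ∀ x y, IsCoupling (mX x) (mY y) (ν x y)
  | k + 2, ν => ∃ νk ν1 : X → Y → X → Y → ℝ,
      IsStepCoupling mX mY (k + 1) νk ∧ (∀ x y, IsCoupling (mX x) (mY y) (ν1 x y)) ∧
      ν = fun x y x' y' => ∑ x'', ∑ y'', νk x'' y'' x' y' * ν1 x y x'' y''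

/-- The `k`-distortion `dis^(k)(γ, ν)`. -/
def disk [Fintype X] [Fintype Y] (dX : X → X → ℝ) (dY : Y → Y → ℝ)
    (γ : X → Y → ℝ) (ν : X → Y → X → Y → ℝ) : ℝ :=
  ∑ x, ∑ y, ∑ x'', ∑ y'', ∑ x', ∑ y',
    |dX x x' - dY y y'| * ν x'' y'' x' y' * γ x'' y'' * γ x y

/-- The `k`-Gromov–Wasserstein distance between Markov chain metric spaces. -/
noncomputable def dGWk [Fintype X] [Fintype Y]
    (mX : X → X → ℝ) (dX : X → X → ℝ) (μX : X → ℝ)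
    (mY : Y → Y → ℝ) (dY : Y → Y → ℝ) (μY : Y → ℝ) (k : ℕ) : ℝ :=
  sInf {r : ℝ | ∃ (γ : X → Y → ℝ) (ν : X → Y → X → Y → ℝ),
      IsCoupling μX μY γ ∧ IsStepCoupling mX mY k ν ∧ r = disk dX dY γ ν}

/-- The absolute Gromov–Wasserstein distance between MCMSs: `sup_{k ≥ 1} d_GW^(k)`. -/
noncomputable def dGWMCMS [Fintype X] [Fintype Y]
    (mX : X → X → ℝ) (dX : X → X → ℝ) (μX : X → ℝ)
    (mY : Y → Y → ℝ) (dY : Y → Y → ℝ) (μY : Y → ℝ) : ℝ :=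
  ⨆ k : ℕ, dGWk mX dX μX mY dY μY (k + 1)

/-- Isomorphism of Markov chain metric spaces. -/
def MCMSIso [Fintype X] [Fintype Y]
    (mX : X → X → ℝ) (dX : X → X → ℝ) (μX : X → ℝ)
    (mY : Y → Y → ℝ) (dY : Y → Y → ℝ) (μY : Y → ℝ) : Prop :=
  ∃ ψ : X ≃ Y, (∀ x x', dY (ψ x) (ψ x') = dX x x') ∧
    (∀ x x', mY (ψ x) (ψ x') = mX x x') ∧ (∀ x, μY (ψ x) = μX x)

/-- The decoupled Gromov–Wasserstein distance between finite metric measure spaces. -/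
noncomputable def dGWbi [Fintype X] [Fintype Y]
    (dX : X → X → ℝ) (μX : X → ℝ) (dY : Y → Y → ℝ) (μY : Y → ℝ) : ℝ :=
  sInf {r : ℝ | ∃ γ γ' : X → Y → ℝ, IsCoupling μX μY γ ∧ IsCoupling μX μY γ' ∧
      r = ∑ x, ∑ y, ∑ x', ∑ y', |dX x x' - dY y y'| * γ' x' y' * γ x y}

/-- `k`-step couplings between the measures `μX` and `μY`
(`k = 0` gives ordinary couplings). -/
def IsMeasureStepCoupling [Fintype X] [Fintype Y] (mX : X → X → ℝ) (mY : Y → Y → ℝ)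
    (μX : X → ℝ) (μY : Y → ℝ) : ℕ → (X → Y → ℝ) → Prop
  | 0, γ => IsCoupling μX μY γ
  | k + 1, γk => ∃ (γ : X → Y → ℝ) (ν : X → Y → X → Y → ℝ),
      IsCoupling μX μY γ ∧ IsStepCoupling mX mY (k + 1) ν ∧
      γk = fun x' y' => ∑ x, ∑ y, ν x y x' y' * γ x y

/-- The WWL label iteration. -/
noncomputable def wwlLabel {V : Type*} [Fintype V] {d : ℕ} (G : SimpleGraph V)
    [DecidableRel G.Adj] (ℓ : V → EuclideanSpace ℝ (Fin d)) :
    ℕ → V → EuclideanSpace ℝ (Fin d)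
  | 0 => ℓ
  | i + 1 => fun v => (1 / 2 : ℝ) •
      (wwlLabel G ℓ i v + ((G.degree v : ℝ))⁻¹ • ∑ v' ∈ G.neighborFinset v, wwlLabel G ℓ i v')

/-- The stacked WWL label `L^k_G = (ℓ^0, …, ℓ^k)`, valued in Euclidean `ℝ^{d(k+1)}`. -/
noncomputable def stackedLabel {V : Type*} [Fintype V] {d : ℕ} (G : SimpleGraph V)
    [DecidableRel G.Adj] (ℓ : V → EuclideanSpace ℝ (Fin d)) (k : ℕ) (v : V) :
    EuclideanSpace ℝ (Fin (k + 1) × Fin d) :=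
  WithLp.toLp 2 (fun p : Fin (k + 1) × Fin d => wwlLabel G ℓ (p.1 : ℕ) v p.2)


section GWbiAux

variable {X Y W : Type*} [Fintype X] [Fintype Y] [Fintype W]

/-- Auxiliary: the decoupled GW cost of a pair of couplings. -/
noncomputable def gwCost (dX : X → X → ℝ) (dY : Y → Y → ℝ) (γ γ' : X → Y → ℝ) : ℝ :=
  ∑ x, ∑ y, ∑ x', ∑ y', |dX x x' - dY y y'| * γ' x' y' * γ x y

/-- Auxiliary: the set of decoupled GW cost values. -/
def gwSet (dX : X → X → ℝ) (μX : X → ℝ) (dY : Y → Y → ℝ) (μY : Y → ℝ) : Set ℝ :=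
  {r : ℝ | ∃ γ γ' : X → Y → ℝ, IsCoupling μX μY γ ∧ IsCoupling μX μY γ' ∧
      r = gwCost dX dY γ γ'}

lemma dGWbi_eq (dX : X → X → ℝ) (μX : X → ℝ) (dY : Y → Y → ℝ) (μY : Y → ℝ) :
    dGWbi dX μX dY μY = sInf (gwSet dX μX dY μY) := rfl

lemma sum4_flat {A B C D : Type*} [Fintype A] [Fintype B] [Fintype C] [Fintype D]
    (F : A → B → C → D → ℝ) :
    (∑ a, ∑ b, ∑ c, ∑ d, F a b c d)
      = ∑ p : A × B × C × D, F p.1 p.2.1 p.2.2.1 p.2.2.2 := by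
  simp [Fintype.sum_prod_type]

lemma gwCost_flat (dX : X → X → ℝ) (dY : Y → Y → ℝ) (γ γ' : X → Y → ℝ) :
    gwCost dX dY γ γ' = ∑ p : X × Y × X × Y,
      |dX p.1 p.2.2.1 - dY p.2.1 p.2.2.2| * γ' p.2.2.1 p.2.2.2 * γ p.1 p.2.1 := by
  rw [gwCost]
  exact sum4_flat _

lemma isCoupling_prod {μX : X → ℝ} {μY : Y → ℝ} (hX : IsPMF μX) (hY : IsPMF μY) :
    IsCoupling μX μY (fun x y => μX x * μY y) := by
  refine ⟨fun x y => mul_nonneg (hX.1 x) (hY.1 y), fun x => ?_, fun y => ?_⟩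
  · rw [← Finset.mul_sum, hY.2, mul_one]
  · rw [← Finset.sum_mul, hX.2, one_mul]

lemma gwCost_nonneg {dX : X → X → ℝ} {dY : Y → Y → ℝ} {γ γ' : X → Y → ℝ}
    (hγ : ∀ x y, 0 ≤ γ x y) (hγ' : ∀ x y, 0 ≤ γ' x y) : 0 ≤ gwCost dX dY γ γ' := by
  refine Finset.sum_nonneg fun x _ => Finset.sum_nonneg fun y _ => Finset.sum_nonneg
    fun x' _ => Finset.sum_nonneg fun y' _ => ?_
  exact mul_nonneg (mul_nonneg (abs_nonneg _) (hγ' x' y')) (hγ x y)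

lemma gwSet_nonempty {dX : X → X → ℝ} {μX : X → ℝ} {dY : Y → Y → ℝ} {μY : Y → ℝ}
    (hX : IsPMF μX) (hY : IsPMF μY) : (gwSet dX μX dY μY).Nonempty :=
  ⟨_, _, _, isCoupling_prod hX hY, isCoupling_prod hX hY, rfl⟩

lemma gwSet_nonneg {dX : X → X → ℝ} {μX : X → ℝ} {dY : Y → Y → ℝ} {μY : Y → ℝ} :
    ∀ r ∈ gwSet dX μX dY μY, 0 ≤ r := by
  rintro r ⟨γ, γ', hγ, hγ', rfl⟩
  exact gwCost_nonneg hγ.1 hγ'.1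

lemma gwSet_bddBelow {dX : X → X → ℝ} {μX : X → ℝ} {dY : Y → Y → ℝ} {μY : Y → ℝ} :
    BddBelow (gwSet dX μX dY μY) :=
  ⟨0, fun _ hr => gwSet_nonneg _ hr⟩

lemma isCoupling_transpose {μX : X → ℝ} {μY : Y → ℝ} {γ : X → Y → ℝ}
    (h : IsCoupling μX μY γ) : IsCoupling μY μX (fun y x => γ x y) :=
  ⟨fun y x => h.1 x y, h.2.2, h.2.1⟩

lemma gwCost_transpose (dX : X → X → ℝ) (dY : Y → Y → ℝ) (γ γ' : X → Y → ℝ) :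
    gwCost dY dX (fun y x => γ x y) (fun y x => γ' x y) = gwCost dX dY γ γ' := by
  rw [gwCost_flat, gwCost_flat]
  refine Fintype.sum_equiv
    (⟨fun p => (p.2.1, p.1, p.2.2.2, p.2.2.1), fun p => (p.2.1, p.1, p.2.2.2, p.2.2.1),
      fun p => rfl, fun p => rfl⟩ : (Y × X × Y × X) ≃ (X × Y × X × Y)) _ _ fun p => ?_
  simp only [Equiv.coe_fn_mk]
  rw [abs_sub_comm]

lemma gwSet_symm (dX : X → X → ℝ) (μX : X → ℝ) (dY : Y → Y → ℝ) (μY : Y → ℝ) :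
    gwSet dY μY dX μX = gwSet dX μX dY μY := by
  ext r
  constructor
  · rintro ⟨γ, γ', hγ, hγ', rfl⟩
    exact ⟨_, _, isCoupling_transpose hγ, isCoupling_transpose hγ',
      (gwCost_transpose dY dX γ γ').symm⟩
  · rintro ⟨γ, γ', hγ, hγ', rfl⟩
    exact ⟨_, _, isCoupling_transpose hγ, isCoupling_transpose hγ',
      (gwCost_transpose dX dY γ γ').symm⟩

/-- Gluing of two couplings through the middle space. -/
noncomputable def glue (μW : W → ℝ) (γ1 : X → W → ℝ) (γ2 : W → Y → ℝ) : X → Y → ℝ :=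
  fun x y => ∑ w, γ1 x w * γ2 w y / μW w

lemma isCoupling_glue {μX : X → ℝ} {μW : W → ℝ} {μY : Y → ℝ}
    {γ1 : X → W → ℝ} {γ2 : W → Y → ℝ} (hW : ∀ w, 0 < μW w)
    (h1 : IsCoupling μX μW γ1) (h2 : IsCoupling μW μY γ2) :
    IsCoupling μX μY (glue μW γ1 γ2) := by
  refine ⟨fun x y => Finset.sum_nonneg fun w _ =>
      div_nonneg (mul_nonneg (h1.1 x w) (h2.1 w y)) (hW w).le, fun x => ?_, fun y => ?_⟩
  · simp only [glue]
    rw [Finset.sum_comm]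
    have : ∀ w, ∑ y, γ1 x w * γ2 w y / μW w = γ1 x w := by
      intro w
      rw [show (fun y => γ1 x w * γ2 w y / μW w) = fun y => γ1 x w / μW w * γ2 w y by
        funext y; ring]
      rw [← Finset.mul_sum, h2.2.1 w, div_mul_cancel₀ _ (hW w).ne']
    rw [Finset.sum_congr rfl fun w _ => this w, h1.2.1 x]
  · simp only [glue]
    rw [Finset.sum_comm]
    have : ∀ w, ∑ x, γ1 x w * γ2 w y / μW w = γ2 w y := by
      intro w
      rw [show (fun x => γ1 x w * γ2 w y / μW w) = fun x => γ2 w y / μW w * γ1 x w by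
        funext x; ring]
      rw [← Finset.mul_sum, h1.2.2 w, div_mul_cancel₀ _ (hW w).ne']
    rw [Finset.sum_congr rfl fun w _ => this w, h2.2.2 y]

lemma sum6_flat {A B C D E F : Type*} [Fintype A] [Fintype B] [Fintype C] [Fintype D]
    [Fintype E] [Fintype F] (G : A → B → C → D → E → F → ℝ) :
    (∑ a, ∑ b, ∑ c, ∑ d, ∑ e, ∑ f, G a b c d e f)
      = ∑ p : A × B × C × D × E × F,
          G p.1 p.2.1 p.2.2.1 p.2.2.2.1 p.2.2.2.2.1 p.2.2.2.2.2 := by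
  simp [Fintype.sum_prod_type]

lemma sum_prod_factor {A B : Type*} [Fintype A] [Fintype B] (c : ℝ) (f : A → ℝ) (g : B → ℝ) :
    (∑ p : A × B, c * f p.1 * g p.2) = c * (∑ a, f a) * (∑ b, g b) := by
  rw [Fintype.sum_prod_type]
  calc ∑ a, ∑ b, c * f a * g b = ∑ a, (c * f a) * ∑ b, g b := by
        refine Finset.sum_congr rfl fun a _ => ?_; rw [Finset.mul_sum]
    _ = (∑ a, c * f a) * ∑ b, g b := by rw [Finset.sum_mul]
    _ = c * (∑ a, f a) * (∑ b, g b) := by rw [← Finset.mul_sum]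

lemma gwCost_glue_le {dX : X → X → ℝ} {dW : W → W → ℝ} {dY : Y → Y → ℝ} {μW : W → ℝ}
    (hW : ∀ w, 0 < μW w) {γ1 γ1' : X → W → ℝ} {γ2 γ2' : W → Y → ℝ}
    (h1 : ∀ x w, 0 ≤ γ1 x w) (h1' : ∀ x w, 0 ≤ γ1' x w)
    (h2 : ∀ w y, 0 ≤ γ2 w y) (h2' : ∀ w y, 0 ≤ γ2' w y)
    (m2 : ∀ w, ∑ y, γ2 w y = μW w) (m2' : ∀ w, ∑ y, γ2' w y = μW w)
    (m1 : ∀ w, ∑ x, γ1 x w = μW w) (m1' : ∀ w, ∑ x, γ1' x w = μW w) :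
    gwCost dX dY (glue μW γ1 γ2) (glue μW γ1' γ2')
      ≤ gwCost dX dW γ1 γ1' + gwCost dW dY γ2 γ2' := by
  have hL : gwCost dX dY (glue μW γ1 γ2) (glue μW γ1' γ2')
      = ∑ x, ∑ y, ∑ x', ∑ y', ∑ w', ∑ w, |dX x x' - dY y y'| *
          (γ1' x' w' * γ2' w' y' / μW w') * (γ1 x w * γ2 w y / μW w) := by
    simp only [gwCost, glue, Finset.mul_sum, Finset.sum_mul]
    exact Finset.sum_congr rfl fun x _ => Finset.sum_congr rfl fun y _ =>
      Finset.sum_congr rfl fun x' _ => Finset.sum_congr rfl fun y' _ => Finset.sum_comm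
  have hbound : (∑ x, ∑ y, ∑ x', ∑ y', ∑ w', ∑ w, |dX x x' - dY y y'| *
          (γ1' x' w' * γ2' w' y' / μW w') * (γ1 x w * γ2 w y / μW w))
      ≤ (∑ x, ∑ y, ∑ x', ∑ y', ∑ w', ∑ w, |dX x x' - dW w w'| *
          (γ1' x' w' * γ2' w' y' / μW w') * (γ1 x w * γ2 w y / μW w))
        + ∑ x, ∑ y, ∑ x', ∑ y', ∑ w', ∑ w, |dW w w' - dY y y'| *
          (γ1' x' w' * γ2' w' y' / μW w') * (γ1 x w * γ2 w y / μW w) := by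
    have step : (∑ x, ∑ y, ∑ x', ∑ y', ∑ w', ∑ w, |dX x x' - dY y y'| *
            (γ1' x' w' * γ2' w' y' / μW w') * (γ1 x w * γ2 w y / μW w))
        ≤ ∑ x, ∑ y, ∑ x', ∑ y', ∑ w', ∑ w,
            (|dX x x' - dW w w'| * (γ1' x' w' * γ2' w' y' / μW w') *
              (γ1 x w * γ2 w y / μW w) +
             |dW w w' - dY y y'| * (γ1' x' w' * γ2' w' y' / μW w') *
              (γ1 x w * γ2 w y / μW w)) := by
      refine Finset.sum_le_sum fun x _ => Finset.sum_le_sum fun y _ =>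
        Finset.sum_le_sum fun x' _ => Finset.sum_le_sum fun y' _ =>
        Finset.sum_le_sum fun w' _ => Finset.sum_le_sum fun w _ => ?_
      have habs := abs_sub_le (dX x x') (dW w w') (dY y y')
      have ht' : 0 ≤ γ1' x' w' * γ2' w' y' / μW w' :=
        div_nonneg (mul_nonneg (h1' x' w') (h2' w' y')) (hW w').le
      have ht : 0 ≤ γ1 x w * γ2 w y / μW w :=
        div_nonneg (mul_nonneg (h1 x w) (h2 w y)) (hW w).le
      nlinarith [mul_le_mul_of_nonneg_right
        (mul_le_mul_of_nonneg_right habs ht') ht]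
    calc _ ≤ _ := step
      _ = _ := by simp [Finset.sum_add_distrib]
  have inner1 : ∀ (x x' : X) (w w' : W),
      (∑ b : Y × Y, |dX x x' - dW w w'| * (γ1' x' w' * γ2' w' b.2 / μW w') *
        (γ1 x w * γ2 w b.1 / μW w))
        = |dX x x' - dW w w'| * γ1' x' w' * γ1 x w := by
    intro x x' w w'
    have hw := (hW w).ne'
    have hw' := (hW w').ne'
    have hterm : ∀ b : Y × Y, |dX x x' - dW w w'| * (γ1' x' w' * γ2' w' b.2 / μW w') *
        (γ1 x w * γ2 w b.1 / μW w)
        = (|dX x x' - dW w w'| * γ1' x' w' * γ1 x w / (μW w' * μW w)) *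
            γ2 w b.1 * γ2' w' b.2 := by
      intro b; ring
    rw [Finset.sum_congr rfl fun b _ => hterm b,
      sum_prod_factor (|dX x x' - dW w w'| * γ1' x' w' * γ1 x w / (μW w' * μW w))
        (fun b1 => γ2 w b1) (fun b2 => γ2' w' b2), m2 w, m2' w']
    field_simp
  have inner2 : ∀ (w w' : W) (y y' : Y),
      (∑ c : X × X, |dW w w' - dY y y'| * (γ1' c.2 w' * γ2' w' y' / μW w') *
        (γ1 c.1 w * γ2 w y / μW w))
        = |dW w w' - dY y y'| * γ2' w' y' * γ2 w y := by
    intro w w' y y'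
    have hw := (hW w).ne'
    have hw' := (hW w').ne'
    have hterm : ∀ c : X × X, |dW w w' - dY y y'| * (γ1' c.2 w' * γ2' w' y' / μW w') *
        (γ1 c.1 w * γ2 w y / μW w)
        = (|dW w w' - dY y y'| * γ2' w' y' * γ2 w y / (μW w' * μW w)) *
            γ1 c.1 w * γ1' c.2 w' := by
      intro c; ring
    rw [Finset.sum_congr rfl fun c _ => hterm c,
      sum_prod_factor (|dW w w' - dY y y'| * γ2' w' y' * γ2 w y / (μW w' * μW w))
        (fun c1 => γ1 c1 w) (fun c2 => γ1' c2 w'), m1 w, m1' w']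
    field_simp
  have E1 : (∑ x, ∑ y, ∑ x', ∑ y', ∑ w', ∑ w, |dX x x' - dW w w'| *
        (γ1' x' w' * γ2' w' y' / μW w') * (γ1 x w * γ2 w y / μW w))
      = gwCost dX dW γ1 γ1' := by
    rw [sum6_flat, gwCost_flat]
    calc (∑ p : X × Y × X × Y × W × W,
            |dX p.1 p.2.2.1 - dW p.2.2.2.2.2 p.2.2.2.2.1| *
              (γ1' p.2.2.1 p.2.2.2.2.1 * γ2' p.2.2.2.2.1 p.2.2.2.1 / μW p.2.2.2.2.1) *
              (γ1 p.1 p.2.2.2.2.2 * γ2 p.2.2.2.2.2 p.2.1 / μW p.2.2.2.2.2))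
        = ∑ q : (X × W × X × W) × Y × Y,
            |dX q.1.1 q.1.2.2.1 - dW q.1.2.1 q.1.2.2.2| *
              (γ1' q.1.2.2.1 q.1.2.2.2 * γ2' q.1.2.2.2 q.2.2 / μW q.1.2.2.2) *
              (γ1 q.1.1 q.1.2.1 * γ2 q.1.2.1 q.2.1 / μW q.1.2.1) := by
          exact Fintype.sum_equiv
            (⟨fun p => ((p.1, p.2.2.2.2.2, p.2.2.1, p.2.2.2.2.1), (p.2.1, p.2.2.2.1)),
              fun q => (q.1.1, q.2.1, q.1.2.2.1, q.2.2, q.1.2.2.2, q.1.2.1),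
              fun p => rfl, fun q => rfl⟩) _ _ (fun p => rfl)
      _ = ∑ a : X × W × X × W, ∑ b : Y × Y,
            |dX a.1 a.2.2.1 - dW a.2.1 a.2.2.2| *
              (γ1' a.2.2.1 a.2.2.2 * γ2' a.2.2.2 b.2 / μW a.2.2.2) *
              (γ1 a.1 a.2.1 * γ2 a.2.1 b.1 / μW a.2.1) := Fintype.sum_prod_type _
      _ = ∑ a : X × W × X × W,
            |dX a.1 a.2.2.1 - dW a.2.1 a.2.2.2| * γ1' a.2.2.1 a.2.2.2 * γ1 a.1 a.2.1 :=
          Finset.sum_congr rfl fun a _ => inner1 a.1 a.2.2.1 a.2.1 a.2.2.2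
  have E2 : (∑ x, ∑ y, ∑ x', ∑ y', ∑ w', ∑ w, |dW w w' - dY y y'| *
        (γ1' x' w' * γ2' w' y' / μW w') * (γ1 x w * γ2 w y / μW w))
      = gwCost dW dY γ2 γ2' := by
    rw [sum6_flat, gwCost_flat]
    calc (∑ p : X × Y × X × Y × W × W,
            |dW p.2.2.2.2.2 p.2.2.2.2.1 - dY p.2.1 p.2.2.2.1| *
              (γ1' p.2.2.1 p.2.2.2.2.1 * γ2' p.2.2.2.2.1 p.2.2.2.1 / μW p.2.2.2.2.1) *
              (γ1 p.1 p.2.2.2.2.2 * γ2 p.2.2.2.2.2 p.2.1 / μW p.2.2.2.2.2))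
        = ∑ q : (W × Y × W × Y) × X × X,
            |dW q.1.1 q.1.2.2.1 - dY q.1.2.1 q.1.2.2.2| *
              (γ1' q.2.2 q.1.2.2.1 * γ2' q.1.2.2.1 q.1.2.2.2 / μW q.1.2.2.1) *
              (γ1 q.2.1 q.1.1 * γ2 q.1.1 q.1.2.1 / μW q.1.1) := by
          exact Fintype.sum_equiv
            (⟨fun p => ((p.2.2.2.2.2, p.2.1, p.2.2.2.2.1, p.2.2.2.1), (p.1, p.2.2.1)),
              fun q => (q.2.1, q.1.2.1, q.2.2, q.1.2.2.2, q.1.2.2.1, q.1.1),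
              fun p => rfl, fun q => rfl⟩) _ _ (fun p => rfl)
      _ = ∑ a : W × Y × W × Y, ∑ c : X × X,
            |dW a.1 a.2.2.1 - dY a.2.1 a.2.2.2| *
              (γ1' c.2 a.2.2.1 * γ2' a.2.2.1 a.2.2.2 / μW a.2.2.1) *
              (γ1 c.1 a.1 * γ2 a.1 a.2.1 / μW a.1) := Fintype.sum_prod_type _
      _ = ∑ a : W × Y × W × Y,
            |dW a.1 a.2.2.1 - dY a.2.1 a.2.2.2| * γ2' a.2.2.1 a.2.2.2 * γ2 a.1 a.2.1 :=
          Finset.sum_congr rfl fun a _ => inner2 a.1 a.2.2.1 a.2.1 a.2.2.2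
  rw [hL, ← E1, ← E2]
  exact hbound

lemma isClosed_isCoupling (μX : X → ℝ) (μY : Y → ℝ) :
    IsClosed {γ : X → Y → ℝ | IsCoupling μX μY γ} := by
  have hset : {γ : X → Y → ℝ | IsCoupling μX μY γ} =
      (⋂ x, ⋂ y, {γ : X → Y → ℝ | 0 ≤ γ x y}) ∩
      ((⋂ x, {γ : X → Y → ℝ | ∑ y, γ x y = μX x}) ∩
        ⋂ y, {γ : X → Y → ℝ | ∑ x, γ x y = μY y}) := by
    ext γ
    simp only [Set.mem_setOf_eq, Set.mem_inter_iff, Set.mem_iInter, IsCoupling]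
  rw [hset]
  have happ : ∀ (x : X) (y : Y), Continuous fun γ : X → Y → ℝ => γ x y := fun x y =>
    (continuous_apply y).comp (continuous_apply x)
  refine ((isClosed_iInter fun x => isClosed_iInter fun y =>
      isClosed_le continuous_const (happ x y))).inter
    (((isClosed_iInter fun x => isClosed_eq
        (continuous_finset_sum _ fun y _ => happ x y) continuous_const)).inter
      (isClosed_iInter fun y => isClosed_eq
        (continuous_finset_sum _ fun x _ => happ x y) continuous_const))

lemma norm_coupling_le_one {μX : X → ℝ} {μY : Y → ℝ} (hX : IsPMF μX)
    {γ : X → Y → ℝ} (hγ : IsCoupling μX μY γ) : ‖γ‖ ≤ 1 := by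
  rw [pi_norm_le_iff_of_nonneg zero_le_one]
  intro x
  rw [pi_norm_le_iff_of_nonneg zero_le_one]
  intro y
  rw [Real.norm_eq_abs, abs_le]
  have hnn := hγ.1 x y
  have hle : γ x y ≤ μX x := by
    rw [← hγ.2.1 x]
    exact Finset.single_le_sum (fun y' _ => hγ.1 x y') (Finset.mem_univ y)
  have hx1 : μX x ≤ 1 := by
    rw [← hX.2]
    exact Finset.single_le_sum (fun x' _ => hX.1 x') (Finset.mem_univ x)
  constructor <;> linarith

lemma gwSet_sInf_mem {dX : X → X → ℝ} {μX : X → ℝ} {dY : Y → Y → ℝ} {μY : Y → ℝ}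
    (hX : IsPMF μX) (hY : IsPMF μY) :
    sInf (gwSet dX μX dY μY) ∈ gwSet dX μX dY μY := by
  set K : Set ((X → Y → ℝ) × (X → Y → ℝ)) :=
    {p | IsCoupling μX μY p.1 ∧ IsCoupling μX μY p.2} with hK
  have himg : gwSet dX μX dY μY = (fun p : (X → Y → ℝ) × (X → Y → ℝ) =>
      gwCost dX dY p.1 p.2) '' K := by
    ext r
    constructor
    · rintro ⟨γ, γ', h, h', rfl⟩
      exact ⟨(γ, γ'), ⟨h, h'⟩, rfl⟩
    · rintro ⟨⟨γ, γ'⟩, ⟨h, h'⟩, rfl⟩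
      exact ⟨γ, γ', h, h', rfl⟩
  have hcl : IsClosed K :=
    ((isClosed_isCoupling μX μY).preimage continuous_fst).inter
      ((isClosed_isCoupling μX μY).preimage continuous_snd)
  have hsub : K ⊆ Metric.closedBall 0 1 := by
    intro p hp
    rw [Metric.mem_closedBall, dist_zero_right, Prod.norm_def]
    exact max_le (norm_coupling_le_one hX hp.1) (norm_coupling_le_one hX hp.2)
  have hbd : Bornology.IsBounded K := (Metric.isBounded_closedBall).subset hsub
  have hcomp : IsCompact K := Metric.isCompact_of_isClosed_isBounded hcl hbd
  have hcont : Continuous fun p : (X → Y → ℝ) × (X → Y → ℝ) =>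
      gwCost dX dY p.1 p.2 := by
    simp only [gwCost]
    refine continuous_finset_sum _ fun x _ => continuous_finset_sum _ fun y _ =>
      continuous_finset_sum _ fun x' _ => continuous_finset_sum _ fun y' _ => ?_
    have hc1 : Continuous fun p : (X → Y → ℝ) × (X → Y → ℝ) => p.2 x' y' :=
      (continuous_apply y').comp ((continuous_apply x').comp continuous_snd)
    have hc2 : Continuous fun p : (X → Y → ℝ) × (X → Y → ℝ) => p.1 x y :=
      (continuous_apply y).comp ((continuous_apply x).comp continuous_fst)
    exact (continuous_const.mul hc1).mul hc2
  have : IsCompact (gwSet dX μX dY μY) := himg ▸ hcomp.image hcont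
  exact this.sInf_mem (gwSet_nonempty hX hY)

lemma exists_iso_of_gwCost_zero {dX : X → X → ℝ} {μX : X → ℝ} {dY : Y → Y → ℝ}
    {μY : Y → ℝ} (hdX : IsMetricOn dX) (hdY : IsMetricOn dY)
    (hμXpos : ∀ x, 0 < μX x) (hμYpos : ∀ y, 0 < μY y)
    {γ γ' : X → Y → ℝ} (hγ : IsCoupling μX μY γ) (hγ' : IsCoupling μX μY γ')
    (hzero : gwCost dX dY γ γ' = 0) :
    ∃ ψ : X ≃ Y, (∀ x x', dY (ψ x) (ψ x') = dX x x') ∧ ∀ x, μY (ψ x) = μX x := by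
  have hterm : ∀ (x : X) (y : Y) (x' : X) (y' : Y),
      |dX x x' - dY y y'| * γ' x' y' * γ x y = 0 := by
    intro x y x' y'
    have hflat : (∑ p : X × Y × X × Y,
        |dX p.1 p.2.2.1 - dY p.2.1 p.2.2.2| * γ' p.2.2.1 p.2.2.2 * γ p.1 p.2.1) = 0 := by
      rw [← gwCost_flat]; exact hzero
    have hnn : ∀ p ∈ (Finset.univ : Finset (X × Y × X × Y)),
        0 ≤ |dX p.1 p.2.2.1 - dY p.2.1 p.2.2.2| * γ' p.2.2.1 p.2.2.2 * γ p.1 p.2.1 :=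
      fun p _ => mul_nonneg (mul_nonneg (abs_nonneg _) (hγ'.1 _ _)) (hγ.1 _ _)
    exact (Finset.sum_eq_zero_iff_of_nonneg hnn).mp hflat (x, y, x', y') (Finset.mem_univ _)
  have H : ∀ x y x' y', 0 < γ x y → 0 < γ' x' y' → dX x x' = dY y y' := by
    intro x y x' y' h h'
    have h1 : |dX x x' - dY y y'| = 0 := by
      by_contra hne
      exact mul_ne_zero (mul_ne_zero hne h'.ne') h.ne' (hterm x y x' y')
    rwa [abs_eq_zero, sub_eq_zero] at h1
  have exX : ∀ x, ∃ y, 0 < γ x y := by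
    intro x
    by_contra h
    push_neg at h
    have hz : ∑ y, γ x y = 0 := Finset.sum_eq_zero fun y _ => le_antisymm (h y) (hγ.1 x y)
    rw [hγ.2.1 x] at hz
    exact absurd hz (ne_of_gt (hμXpos x))
  have exY : ∀ y, ∃ x, 0 < γ x y := by
    intro y
    by_contra h
    push_neg at h
    have hz : ∑ x, γ x y = 0 := Finset.sum_eq_zero fun x _ => le_antisymm (h x) (hγ.1 x y)
    rw [hγ.2.2 y] at hz
    exact absurd hz (ne_of_gt (hμYpos y))
  have exX' : ∀ x, ∃ y, 0 < γ' x y := by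
    intro x
    by_contra h
    push_neg at h
    have hz : ∑ y, γ' x y = 0 := Finset.sum_eq_zero fun y _ => le_antisymm (h y) (hγ'.1 x y)
    rw [hγ'.2.1 x] at hz
    exact absurd hz (ne_of_gt (hμXpos x))
  have hsub : ∀ x y, 0 < γ x y → 0 < γ' x y := by
    intro x y h
    obtain ⟨y', hy'⟩ := exX' x
    have hd := H x y x y' h hy'
    rw [hdX.1 x] at hd
    by_cases hyy : y = y'
    · rw [hyy]; exact hy'
    · exact absurd hd.symm (ne_of_gt (hdY.2.2.1 y y' hyy))
  have hfun : ∀ x y y₂, 0 < γ x y → 0 < γ x y₂ → y = y₂ := by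
    intro x y y₂ h1 h2
    have h' := hsub x y₂ h2
    have hd := H x y x y₂ h1 h'
    rw [hdX.1 x] at hd
    by_contra hne
    exact absurd hd.symm (ne_of_gt (hdY.2.2.1 y y₂ hne))
  have hinj : ∀ x x₂ y, 0 < γ x y → 0 < γ x₂ y → x = x₂ := by
    intro x x₂ y h1 h2
    have h' := hsub x y h1
    have hd := H x₂ y x y h2 h'
    rw [hdY.1 y] at hd
    by_contra hne
    exact absurd hd (ne_of_gt (hdX.2.2.1 x₂ x fun hh => hne hh.symm))
  choose ψ hψ using exX
  have hinjective : Function.Injective ψ := by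
    intro a b hab
    exact hinj a b (ψ b) (by rw [← hab]; exact hψ a) (hψ b)
  have hsurjective : Function.Surjective ψ := by
    intro y
    obtain ⟨x, hx⟩ := exY y
    exact ⟨x, hfun x (ψ x) y (hψ x) hx⟩
  refine ⟨Equiv.ofBijective ψ ⟨hinjective, hsurjective⟩,
    fun x x' => (H x (ψ x) x' (ψ x') (hψ x) (hsub x' (ψ x') (hψ x'))).symm, fun x => ?_⟩
  have h1 : ∑ x₂, γ x₂ (ψ x) = γ x (ψ x) := by
    refine Finset.sum_eq_single x (fun x₂ _ hne => ?_) (fun h => absurd (Finset.mem_univ x) h)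
    by_contra h
    exact hne (hinj x₂ x (ψ x) (lt_of_le_of_ne (hγ.1 x₂ (ψ x)) (Ne.symm h)) (hψ x))
  have h2 : ∑ y, γ x y = γ x (ψ x) := by
    refine Finset.sum_eq_single (ψ x) (fun y _ hne => ?_)
      (fun h => absurd (Finset.mem_univ (ψ x)) h)
    by_contra h
    exact hne (hfun x y (ψ x) (lt_of_le_of_ne (hγ.1 x y) (Ne.symm h)) (hψ x))
  calc μY (Equiv.ofBijective ψ ⟨hinjective, hsurjective⟩ x) = μY (ψ x) := rfl
    _ = γ x (ψ x) := by rw [← hγ.2.2 (ψ x), h1]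
    _ = μX x := by rw [← hγ.2.1 x, h2]

end GWbiAux

theorem dGWbi_metric {X Y W : Type*} [Fintype X] [Fintype Y] [Fintype W]
    (dX : X → X → ℝ) (μX : X → ℝ) (dY : Y → Y → ℝ) (μY : Y → ℝ)
    (dW : W → W → ℝ) (μW : W → ℝ)
    (hdX : IsMetricOn dX) (hdY : IsMetricOn dY) (hdW : IsMetricOn dW)
    (hμX : IsPMF μX) (hμY : IsPMF μY) (hμW : IsPMF μW)
    (hμXpos : ∀ x, 0 < μX x) (hμYpos : ∀ y, 0 < μY y) (hμWpos : ∀ w, 0 < μW w) :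
    0 ≤ dGWbi dX μX dY μY ∧
    dGWbi dX μX dY μY = dGWbi dY μY dX μX ∧
    dGWbi dX μX dY μY ≤ dGWbi dX μX dW μW + dGWbi dW μW dY μY ∧
    (dGWbi dX μX dY μY = 0 ↔
      ∃ ψ : X ≃ Y, (∀ x x', dY (ψ x) (ψ x') = dX x x') ∧ (∀ x, μY (ψ x) = μX x)) := by
  have hnonneg : 0 ≤ dGWbi dX μX dY μY := by
    rw [dGWbi_eq]
    exact le_csInf (gwSet_nonempty hμX hμY) fun r hr => gwSet_nonneg r hr
  refine ⟨hnonneg, ?_, ?_, ?_⟩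
  · rw [dGWbi_eq, dGWbi_eq, gwSet_symm]
  · rw [dGWbi_eq, dGWbi_eq, dGWbi_eq]
    have hne1 : (gwSet dX μX dW μW).Nonempty := gwSet_nonempty hμX hμW
    have hne2 : (gwSet dW μW dY μY).Nonempty := gwSet_nonempty hμW hμY
    have key : ∀ r1 ∈ gwSet dX μX dW μW, ∀ r2 ∈ gwSet dW μW dY μY,
        sInf (gwSet dX μX dY μY) ≤ r1 + r2 := by
      rintro r1 ⟨γ1, γ1', h1, h1', rfl⟩ r2 ⟨γ2, γ2', h2, h2', rfl⟩
      refine le_trans (csInf_le gwSet_bddBelow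
        ⟨glue μW γ1 γ2, glue μW γ1' γ2', isCoupling_glue hμWpos h1 h2,
          isCoupling_glue hμWpos h1' h2', rfl⟩) ?_
      exact gwCost_glue_le hμWpos h1.1 h1'.1 h2.1 h2'.1 h2.2.1 h2'.2.1 h1.2.2 h1'.2.2
    have step1 : ∀ r2 ∈ gwSet dW μW dY μY,
        sInf (gwSet dX μX dY μY) - r2 ≤ sInf (gwSet dX μX dW μW) := by
      intro r2 hr2
      refine le_csInf hne1 fun r1 hr1 => ?_
      linarith [key r1 hr1 r2 hr2]
    have step2 : sInf (gwSet dX μX dY μY) - sInf (gwSet dX μX dW μW)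
        ≤ sInf (gwSet dW μW dY μY) := by
      refine le_csInf hne2 fun r2 hr2 => ?_
      linarith [step1 r2 hr2]
    linarith
  · constructor
    · intro h0
      have hmem := gwSet_sInf_mem (dX := dX) (dY := dY) hμX hμY
      rw [← dGWbi_eq, h0] at hmem
      obtain ⟨γ, γ', hγ, hγ', hc⟩ := hmem
      exact exists_iso_of_gwCost_zero hdX hdY hμXpos hμYpos hγ hγ' hc.symm
    · rintro ⟨ψ, hiso, hmeas⟩
      classical
      set γ : X → Y → ℝ := fun x y => if y = ψ x then μX x else 0 with hγdef
      have hcoup : IsCoupling μX μY γ := by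
        refine ⟨fun x y => ?_, fun x => ?_, fun y => ?_⟩
        · by_cases h : y = ψ x <;> simp [hγdef, h, (hμXpos x).le]
        · simp [hγdef]
        · calc ∑ x, γ x y = ∑ x, (if ψ.symm y = x then μX x else 0) := by
                refine Finset.sum_congr rfl fun x _ => ?_
                by_cases h : y = ψ x
                · have h2 : ψ.symm y = x := by rw [Equiv.symm_apply_eq]; exact h
                  simp [hγdef, h, h2]
                · have h2 : ¬ψ.symm y = x := fun hh => h ((Equiv.symm_apply_eq ψ).mp hh)
                  simp [hγdef, h, h2]
            _ = μX (ψ.symm y) := by simp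
            _ = μY y := by rw [← hmeas (ψ.symm y), Equiv.apply_symm_apply]
      have hcost : gwCost dX dY γ γ = 0 := by
        rw [gwCost_flat]
        apply Finset.sum_eq_zero
        intro p _
        by_cases h1 : p.2.1 = ψ p.1
        · by_cases h2 : p.2.2.2 = ψ p.2.2.1
          · rw [h1, h2, hiso, sub_self, abs_zero, zero_mul, zero_mul]
          · simp [hγdef, h2]
        · simp [hγdef, h1]
      have hle : dGWbi dX μX dY μY ≤ 0 := by
        rw [dGWbi_eq]
        exact csInf_le gwSet_bddBelow ⟨γ, γ, hcoup, hcoup, hcost.symm⟩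
      linarith


end WLGW
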